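/- Let G have highway dimension at most h and maximum vertex degree at most Δ. Then for every v ∈ V and every r > 0, the number of edges of G of weight at least r having at least one endpoint in B(v,2r) is at most h·Δ. -/
import Mathlib


open SimpleGraph

/-- The length (total weight) of a walk under an edge-weight function `w`. -/
noncomputable def wlen {V : Type*} {G : SimpleGraph V} (w : Sym2 V → ℝ) {u v : V}
    (p : G.Walk u v) : ℝ :=
  (p.edges.map w).sum

/-- `p` is a subwalk (subpath) of `q`. -/
def IsSubwalk {V : Type*} {G : SimpleGraph V} {u v a b : V}
    (p : G.Walk u v) (q : G.Walk a b) : Prop :=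
  ∃ (q1 : G.Walk a u) (q2 : G.Walk v b), q = (q1.append p).append q2

/-- Shortest-path distance as the infimum of walk lengths. -/
noncomputable def wdist {V : Type*} (G : SimpleGraph V) (w : Sym2 V → ℝ) (u v : V) : ℝ :=
  sInf {x : ℝ | ∃ p : G.Walk u v, x = wlen w p}

/-- A finite connected positively-weighted graph (all weights at least 1) with
unique shortest paths, in which every edge is the unique shortest path between
its endpoints.  `sp u v` is the unique shortest path from `u` to `v`. -/
structure Setting (V : Type) [Fintype V] where
  G : SimpleGraph V
  w : Sym2 V → ℝ
  connected : G.Connected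
  one_le_w : ∀ e ∈ G.edgeSet, 1 ≤ w e
  sp : ∀ u v : V, G.Walk u v
  sp_isPath : ∀ u v : V, (sp u v).IsPath
  sp_shortest : ∀ (u v : V) (q : G.Walk u v), wlen w (sp u v) ≤ wlen w q
  sp_unique : ∀ (u v : V) (q : G.Walk u v), q.IsPath →
    wlen w q = wlen w (sp u v) → q = sp u v
  edge_sp : ∀ (u v : V) (h : G.Adj u v),
    sp u v = SimpleGraph.Walk.cons h SimpleGraph.Walk.nil

namespace Setting

variable {V : Type} [Fintype V]

/-- Shortest-path distance `d(u,v)`. -/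
noncomputable def d (S : Setting V) (u v : V) : ℝ := wlen S.w (S.sp u v)

/-- The ball `B(v,r)`. -/
def ball (S : Setting V) (v : V) (r : ℝ) : Set V := {u : V | S.d v u ≤ r}

/-- `maxedge(p(u,v)) ≤ r`: every edge of the shortest path has weight at most `r`. -/
def maxedgeLE (S : Setting V) (u v : V) (r : ℝ) : Prop :=
  ∀ e ∈ (S.sp u v).edges, S.w e ≤ r

/-- An `(r,k)` vertex cover. -/
def IsVertexCover (S : Setting V) (r : ℝ) (k : ℕ) (C : Set V) : Prop :=
  (∀ v1 v2 : V, r < S.d v1 v2 → S.maxedgeLE v1 v2 r →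
      ∃ c ∈ C, c ∈ (S.sp v1 v2).support) ∧
  (∀ v : V, (S.ball v (2 * r) ∩ C).ncard ≤ k)

/-- Discrete highway dimension at most `h`. -/
def DiscreteHDLE (S : Setting V) (h : ℕ) : Prop :=
  ∀ (v : V) (r : ℝ), 0 < r →
    ∃ C : Set V, C.ncard ≤ h ∧
      ∀ v1 v2 : V, (∀ x ∈ (S.sp v1 v2).support, x ∈ S.ball v (4 * r)) →
        r < S.d v1 v2 → ∃ c ∈ C, c ∈ (S.sp v1 v2).support

/-- The (unique) shortest path from `v1` to `v2` is `r`-significant: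
it has an `r`-witness. -/
def RSignificant (S : Setting V) (r : ℝ) (v1 v2 : V) : Prop :=
  ∃ a b : V, (a = v1 ∨ S.G.Adj a v1) ∧ (b = v2 ∨ S.G.Adj b v2) ∧
    r ≤ S.d a b ∧ IsSubwalk (S.sp v1 v2) (S.sp a b)

/-- The shortest path from `v1` to `v2` is `(r,2r)`-close to `v`,
i.e. it belongs to `S(v,r)`. -/
def InSvr (S : Setting V) (v : V) (r : ℝ) (v1 v2 : V) : Prop :=
  ∃ a b : V, (a = v1 ∨ S.G.Adj a v1) ∧ (b = v2 ∨ S.G.Adj b v2) ∧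
    r ≤ S.d a b ∧ IsSubwalk (S.sp v1 v2) (S.sp a b) ∧
    ∃ x ∈ (S.sp a b).support, S.d v x ≤ 2 * r

/-- Highway dimension at most `h`. -/
def HighwayDimLE (S : Setting V) (h : ℕ) : Prop :=
  ∀ (r : ℝ), 0 < r → ∀ v : V,
    ∃ C : Set V, C.ncard ≤ h ∧
      ∀ v1 v2 : V, S.InSvr v r v1 v2 → ∃ c ∈ C, c ∈ (S.sp v1 v2).support

/-- An `(r,h')`-SPHS. -/
def IsSPHS (S : Setting V) (r : ℝ) (h' : ℕ) (C : Set V) : Prop :=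
  (∀ v1 v2 : V, S.RSignificant r v1 v2 → ∃ c ∈ C, c ∈ (S.sp v1 v2).support) ∧
  (∀ v : V, (C ∩ S.ball v (2 * r)).ncard ≤ h')

/-- Adjacency in the `r`-shortcut graph `G(C,r)`. -/
def shortcutAdj (S : Setting V) (C : Set V) (r : ℝ) (v1 v2 : V) : Prop :=
  v1 ≠ v2 ∧ v1 ∈ C ∧ v2 ∈ C ∧ S.d v1 v2 ≤ r ∧
    ∀ c ∈ C, c ∈ (S.sp v1 v2).support → c = v1 ∨ c = v2

/-- An `(r,η)` path cover, a set of shortest paths represented by their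
endpoint pairs. -/
def IsPathCover (S : Setting V) (r : ℝ) (η : ℕ) (P : Set (V × V)) : Prop :=
  (∀ q ∈ P, r / 4 ≤ S.d q.1 q.2 ∧ S.d q.1 q.2 ≤ r) ∧
  (∀ v1 v2 : V, r / 2 ≤ S.d v1 v2 → S.d v1 v2 ≤ r → S.maxedgeLE v1 v2 (r / 8) →
    ∃ q ∈ P, IsSubwalk (S.sp q.1 q.2) (S.sp v1 v2) ∧
      S.d v1 q.1 ≤ r / 8 ∧ S.d q.2 v2 ≤ r / 8) ∧
  (∀ v : V, {q ∈ P | ∃ x ∈ (S.sp q.1 q.2).support, S.d v x ≤ 4 * r}.ncard ≤ η)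

/-- A pair of vertices of `Cm` is *considered* at level `i`. -/
def Considered (S : Setting V) (Cm : Set V) (i : ℤ) (q : V × V) : Prop :=
  q.1 ∈ Cm ∧ q.2 ∈ Cm ∧
    3 / 4 * (8 : ℝ) ^ i ≤ S.d q.1 q.2 ∧ S.d q.1 q.2 ≤ (8 : ℝ) ^ i ∧
    S.maxedgeLE q.1 q.2 ((8 : ℝ) ^ (i - 1))

/-- `C'` is a valid output of the greedy construction at level `i` from `Cm`. -/
def ValidGreedy (S : Setting V) (Cm : Set V) (i : ℤ) (C' : Set V) : Prop :=
  ∃ (m : ℕ) (q : Fin m → V × V),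
    Function.Injective q ∧
    (∀ p : V × V, S.Considered Cm i p ↔ ∃ j : Fin m, q j = p) ∧
    ∃ Sc : Fin (m + 1) → Set V,
      Sc 0 = ∅ ∧ Sc (Fin.last m) = C' ∧
      ∀ j : Fin m,
        ((∃ c ∈ Sc j.castSucc, c ∈ (S.sp (q j).1 (q j).2).support) →
          Sc j.succ = Sc j.castSucc) ∧
        ((¬ ∃ c ∈ Sc j.castSucc, c ∈ (S.sp (q j).1 (q j).2).support) →
          ∃ c ∈ Cm, c ∈ (S.sp (q j).1 (q j).2).support ∧
            (∀ c' ∈ Cm, c' ∈ (S.sp (q j).1 (q j).2).support →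
              |S.d (q j).1 c - S.d (q j).1 (q j).2 / 2| ≤
                |S.d (q j).1 c' - S.d (q j).1 (q j).2 / 2|) ∧
            Sc j.succ = insert c (Sc j.castSucc))

/-- The set of endpoints of edges of weight greater than `t`. -/
def bigEdgeEnds (S : Setting V) (t : ℝ) : Set V :=
  {x : V | ∃ e ∈ S.G.edgeSet, t < S.w e ∧ x ∈ e}

end Setting

/-- In a graph of highway dimension at most `h` and maximum
degree at most `Δ`, at most `h·Δ` edges of weight at least `r` have an endpoint
in `B(v,2r)`. -/
theorem stmt1 {V : Type} [Fintype V] (S : Setting V) (h Δ : ℕ)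
    (hHD : S.HighwayDimLE h)
    (hdeg : ∀ v : V, (S.G.neighborSet v).ncard ≤ Δ)
    (v : V) (r : ℝ) (hr : 0 < r) :
    {e : Sym2 V | e ∈ S.G.edgeSet ∧ r ≤ S.w e ∧ ∃ x ∈ e, x ∈ S.ball v (2 * r)}.ncard
      ≤ h * Δ := by
  classical
  obtain ⟨C, hC, hcov⟩ := hHD r hr v
  have hsub : {e : Sym2 V | e ∈ S.G.edgeSet ∧ r ≤ S.w e ∧ ∃ x ∈ e, x ∈ S.ball v (2 * r)}
      ⊆ ⋃ c ∈ C, S.G.incidenceSet c := by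
    rintro e ⟨he, hwe, x, hxe, hxb⟩
    set y := Sym2.Mem.other hxe with hy
    have hspec : s(x, y) = e := Sym2.other_spec hxe
    have hadj : S.G.Adj x y := by rw [← SimpleGraph.mem_edgeSet, hspec]; exact he
    have hsp : S.sp x y = SimpleGraph.Walk.cons hadj SimpleGraph.Walk.nil :=
      S.edge_sp x y hadj
    have hd : S.d x y = S.w e := by
      simp [Setting.d, hsp, wlen, hspec]
    have hin : S.InSvr v r x y := by
      refine ⟨x, y, Or.inl rfl, Or.inl rfl, ?_, ?_, x, ?_, ?_⟩
      · rw [hd]; exact hwe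
      · exact ⟨SimpleGraph.Walk.nil, SimpleGraph.Walk.nil, by simp⟩
      · exact SimpleGraph.Walk.start_mem_support _
      · exact hxb
    obtain ⟨c, hcC, hcs⟩ := hcov x y hin
    rw [hsp] at hcs
    simp only [SimpleGraph.Walk.support_cons, SimpleGraph.Walk.support_nil,
      List.mem_cons, List.mem_singleton, List.not_mem_nil, or_false] at hcs
    refine Set.mem_biUnion hcC ?_
    rcases hcs with rfl | rfl
    · exact ⟨he, hxe⟩
    · exact ⟨he, Sym2.other_mem hxe⟩
  have hfin : (⋃ c ∈ C, S.G.incidenceSet c).Finite := Set.toFinite _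
  have h1 : {e : Sym2 V | e ∈ S.G.edgeSet ∧ r ≤ S.w e ∧ ∃ x ∈ e, x ∈ S.ball v (2 * r)}.ncard
      ≤ (⋃ c ∈ C, S.G.incidenceSet c).ncard := Set.ncard_le_ncard hsub hfin
  have heq : (⋃ c ∈ C, S.G.incidenceSet c)
      = ↑(C.toFinset.biUnion (fun c => (S.G.incidenceSet c).toFinset)) := by
    ext e
    simp [Set.mem_iUnion]
  have h2 : (⋃ c ∈ C, S.G.incidenceSet c).ncard ≤ C.ncard * Δ := by
    rw [heq, Set.ncard_coe_finset]
    calc (C.toFinset.biUnion (fun c => (S.G.incidenceSet c).toFinset)).card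
        ≤ ∑ c ∈ C.toFinset, (S.G.incidenceSet c).toFinset.card :=
          Finset.card_biUnion_le
      _ ≤ ∑ _c ∈ C.toFinset, Δ := by
          refine Finset.sum_le_sum fun c _ => ?_
          rw [← Set.ncard_eq_toFinset_card']
          calc (S.G.incidenceSet c).ncard = (S.G.neighborSet c).ncard := by
                rw [← Nat.card_coe_set_eq, ← Nat.card_coe_set_eq]
                exact Nat.card_congr (S.G.incidenceSetEquivNeighborSet c)
            _ ≤ Δ := hdeg c
      _ = C.toFinset.card * Δ := by rw [Finset.sum_const, smul_eq_mul]
      _ = C.ncard * Δ := by rw [Set.ncard_eq_toFinset_card']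
  exact h1.trans (h2.trans (Nat.mul_le_mul_right Δ hC))
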